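/- arXiv:2308.12257 — 9 statements merged into one kernel-verified Lean document; each statement's English description precedes it below -/
import Mathlib

section
/- Let X be a locally compact, locally connected Hausdorff space and f : X² → X a continuous binary operation such that for each t ∈ X the map f_t : X → X, f_t(x) = f(t,x), is a homeomorphism. Then f is invertible in the monoid of continuous binary operations: the map f⁻¹ : X² → X defined by f⁻¹(t,x) = f_t⁻¹(x) is continuous and satisfies f * f⁻¹ = f⁻¹ * f = e. -/
/-- Invertibility criterion: on a locally compact, locally connected Hausdorff
space, a continuous binary operation whose sections `f t ·` are all
homeomorphisms is invertible in the monoid of continuous binary operations,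
with inverse `f⁻¹ t x = (f t)⁻¹ x`. -/
theorem binary_operation_invertible
    {X : Type*} [TopologicalSpace X] [LocallyCompactSpace X]
    [LocallyConnectedSpace X] [T2Space X]
    (f : X → X → X)
    (hcont : Continuous fun p : X × X => f p.1 p.2)
    (hhomeo : ∀ t : X, IsHomeomorph (f t)) :
    ∃ finv : X → X → X,
      Continuous (fun p : X × X => finv p.1 p.2) ∧
      (∀ t x : X, finv t (f t x) = x) ∧
      (∀ t x : X, f t (finv t x) = x) := by
  classical
  set h : X → X ≃ₜ X := fun t => (hhomeo t).homeomorph (f t) with hh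
  refine ⟨fun t y => (h t).symm y, ?_, ?_, ?_⟩
  · -- joint continuity of the inverse
    rw [continuous_iff_continuousAt]
    rintro ⟨t₀, y₀⟩
    intro U hU
    set x₀ : X := (h t₀).symm y₀ with hx₀
    have hfx₀ : f t₀ x₀ = y₀ := (h t₀).apply_symm_apply y₀
    rcases mem_nhds_iff.1 hU with ⟨U', hU'U, hU'o, hx₀U'⟩
    -- compact neighborhood K of x₀ inside U'
    obtain ⟨K, hKc, hx₀K, hKU'⟩ := exists_compact_subset hU'o hx₀U'
    have hKcl : IsClosed K := hKc.isClosed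
    -- the image of the "boundary" of K under f t₀ misses y₀
    set C : Set X := f t₀ '' (K \ interior K) with hC
    have hCc : IsCompact C := (hKc.diff isOpen_interior).image (hhomeo t₀).continuous
    have hy₀C : y₀ ∉ C := by
      rintro ⟨x, hx, hfx⟩
      have : x = x₀ := (hhomeo t₀).injective (by rw [hfx, hfx₀])
      exact hx.2 (this ▸ hx₀K)
    -- compact neighborhood N of y₀ disjoint from C
    obtain ⟨N, hNc, hy₀N, hNC⟩ :=
      exists_compact_subset hCc.isClosed.isOpen_compl hy₀C
    -- connected open neighborhood V of y₀ inside interior N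
    obtain ⟨V, ⟨hVo, hy₀V, hVconn⟩, hVN⟩ :=
      (LocallyConnectedSpace.open_connected_basis y₀).mem_iff.1
        (mem_interior_iff_mem_nhds.1 hy₀N)
    have hclV : closure V ⊆ Cᶜ := by
      refine Set.Subset.trans ?_ hNC
      calc closure V ⊆ closure N := closure_mono hVN
        _ = N := hNc.isClosed.closure_eq
    -- tube lemma: for t near t₀, f t maps the boundary of K outside closure V
    have hn : IsOpen ((fun p : X × X => f p.1 p.2) ⁻¹' (closure V)ᶜ) :=
      isClosed_closure.isOpen_compl.preimage hcont
    have hsub : ({t₀} : Set X) ×ˢ (K \ interior K) ⊆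
        (fun p : X × X => f p.1 p.2) ⁻¹' (closure V)ᶜ := by
      rintro ⟨t, x⟩ ⟨ht, hx⟩
      simp only [Set.mem_singleton_iff] at ht
      subst ht
      intro hmem
      exact hclV hmem ⟨x, hx, rfl⟩
    obtain ⟨T₁, W, hT₁o, _, ht₀T₁, hKW, htube⟩ :=
      generalized_tube_lemma isCompact_singleton (hKc.diff isOpen_interior) hn hsub
    have ht₀T₁' : t₀ ∈ T₁ := ht₀T₁ rfl
    -- second neighborhood: t's with f t x₀ ∈ V
    have hT₂o : IsOpen ((fun t => f t x₀) ⁻¹' V) := by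
      have : Continuous fun t => f t x₀ :=
        hcont.comp (continuous_id.prodMk continuous_const)
      exact hVo.preimage this
    have ht₀T₂ : t₀ ∈ (fun t => f t x₀) ⁻¹' V := by
      simpa [hfx₀] using hy₀V
    -- key claim: for t ∈ T₁ ∩ T₂ and y ∈ V, the inverse lands in K
    have key : ∀ t ∈ T₁ ∩ (fun t => f t x₀) ⁻¹' V, ∀ y ∈ V, (h t).symm y ∈ K := by
      rintro t ⟨htT₁, htT₂⟩ y hy
      set S : Set X := f t '' K with hS
      have hSc : IsCompact S := hKc.image (hhomeo t).continuous
      have hScl : IsClosed S := hSc.isClosed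
      -- any point of V lying in S lies in interior S
      have hVS : ∀ y' ∈ V, y' ∈ S → y' ∈ interior S := by
        intro y' hy' hy'S
        by_contra hnot
        have hfr : y' ∈ frontier S := by
          rw [hScl.frontier_eq]; exact ⟨hy'S, hnot⟩
        -- frontier S = f t '' (K \ interior K)
        have hco : ⇑(h t) = f t := by
          funext x; simp [hh]
        have hfr' : frontier S = f t '' (K \ interior K) := by
          rw [hS, ← hKcl.frontier_eq, ← hco, ← (h t).image_frontier]
        rw [hfr'] at hfr
        obtain ⟨x, hxK, hfxy⟩ := hfr
        have hmem := htube (Set.mk_mem_prod htT₁ (hKW hxK))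
        apply hmem
        show f t x ∈ closure V
        rw [hfxy]
        exact subset_closure hy'
      -- V ⊆ interior S ∪ Sᶜ, and these are disjoint open sets
      have hVsub : V ⊆ interior S ∪ Sᶜ := by
        intro y' hy'
        by_cases hy'S : y' ∈ S
        · exact Or.inl (hVS y' hy' hy'S)
        · exact Or.inr hy'S
      have hdisj : Disjoint (interior S) Sᶜ :=
        Set.disjoint_left.2 fun a ha ha' => ha' (interior_subset ha)
      have hne : (V ∩ interior S).Nonempty := by
        refine ⟨f t x₀, htT₂, hVS _ htT₂ ⟨x₀, interior_subset hx₀K, rfl⟩⟩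
      have hVSS : V ⊆ interior S :=
        hVconn.isPreconnected.subset_left_of_subset_union isOpen_interior
          hScl.isOpen_compl hdisj hVsub hne
      -- conclude
      have hyS : y ∈ S := interior_subset (hVSS hy)
      obtain ⟨x, hxK, hfxy⟩ := hyS
      have : (h t).symm y = x := by
        rw [← hfxy]
        exact (h t).symm_apply_apply x
      rw [this]; exact hxK
    -- assemble the neighborhood
    rw [Filter.mem_map, nhds_prod_eq]
    refine Filter.mem_of_superset
      (Filter.prod_mem_prod
        (((hT₁o.inter hT₂o).mem_nhds ⟨ht₀T₁', ht₀T₂⟩))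
        (hVo.mem_nhds hy₀V)) ?_
    rintro ⟨t, y⟩ ⟨ht, hy⟩
    exact hU'U (hKU' (key t ht y hy))
  · intro t x
    exact (h t).symm_apply_apply x
  · intro t x
    exact (h t).apply_symm_apply x
end

section
/- Let X be a distributive binary G-space. Then for every x ∈ X the set G(x,x) = { g(x,x) : g ∈ G } is bi-invariant, i.e., g(h(x,x), k(x,x)) ∈ G(x,x) for all g,h,k ∈ G; in fact g(h(x,x), k(x,x)) = (h g h⁻¹ k)(x,x). -/
/-- In a distributive binary `G`-space, the orbit `G(x,x)` is bi-invariant: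
`g(h(x,x), k(x,x)) = (h g h⁻¹ k)(x,x) ∈ G(x,x)`. -/
theorem orbit_biinvariant
    {G X : Type*} [Group G] [TopologicalSpace G] [IsTopologicalGroup G]
    [TopologicalSpace X]
    (α : G → X → X → X)
    (hcont : Continuous fun p : G × X × X => α p.1 p.2.1 p.2.2)
    (hmul : ∀ (g h : G) (x x' : X), α (g * h) x x' = α g x (α h x x'))
    (hone : ∀ (x x' : X), α (1 : G) x x' = x')
    (hdist : ∀ (g h : G) (x x' x'' : X),
      α g (α h x x') (α h x x'') = α h x (α g x' x''))
    (x : X) :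
    ∀ g h k : G,
      α g (α h x x) (α k x x) = α (h * g * h⁻¹ * k) x x ∧
      α g (α h x x) (α k x x) ∈ {y : X | ∃ g' : G, y = α g' x x} := by
  intro g h k
  have key : α g (α h x x) (α k x x) = α (h * g * h⁻¹ * k) x x := by
    have hk : α k x x = α h x (α (h⁻¹ * k) x x) := by
      rw [← hmul]; group
    rw [hk, hdist, ← hmul, ← hmul]
    group
  exact ⟨key, ⟨h * g * h⁻¹ * k, key⟩⟩
end

section
/- In a distributive binary G-space X, any two orbits G(x,x) and G(x',x') either are disjoint or coincide; equivalently, the relation x ∼ y iff y ∈ G(x,x) is an equivalence relation on X. -/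
/-- In a distributive binary `G`-space, any two orbits `G(x,x)`, `G(x',x')`
are disjoint or coincide; equivalently, `y ∈ G(x,x)` is an equivalence
relation. -/
theorem orbits_disjoint_or_eq
    {G X : Type*} [Group G] [TopologicalSpace G] [IsTopologicalGroup G]
    [TopologicalSpace X]
    (α : G → X → X → X)
    (hcont : Continuous fun p : G × X × X => α p.1 p.2.1 p.2.2)
    (hmul : ∀ (g h : G) (x x' : X), α (g * h) x x' = α g x (α h x x'))
    (hone : ∀ (x x' : X), α (1 : G) x x' = x')
    (hdist : ∀ (g h : G) (x x' x'' : X),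
      α g (α h x x') (α h x x'') = α h x (α g x' x'')) :
    let orbit : X → Set X := fun x => {y : X | ∃ g : G, y = α g x x}
    (∀ x x' : X, Disjoint (orbit x) (orbit x') ∨ orbit x = orbit x') ∧
    Equivalence (fun x y : X => y ∈ orbit x) := by
  intro orbit
  have refl : ∀ x : X, x ∈ orbit x := fun x => ⟨1, (hone x x).symm⟩
  have symm : ∀ {x y : X}, y ∈ orbit x → x ∈ orbit y := by
    rintro x y ⟨g, rfl⟩
    refine ⟨g⁻¹, ?_⟩
    rw [hdist, ← hmul, mul_inv_cancel, hone]
  have trans : ∀ {x y z : X}, y ∈ orbit x → z ∈ orbit y → z ∈ orbit x := by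
    rintro x y z ⟨g, rfl⟩ ⟨h, rfl⟩
    exact ⟨g * h, by rw [hmul, hdist]⟩
  constructor
  · intro x x'
    by_cases hd : Disjoint (orbit x) (orbit x')
    · exact Or.inl hd
    · right
      rw [Set.not_disjoint_iff] at hd
      obtain ⟨z, hz, hz'⟩ := hd
      ext y
      constructor
      · intro hy
        exact trans hz' (trans (symm hz) hy)
      · intro hy
        exact trans hz (trans (symm hz') hy)
  · exact ⟨refl, fun h => symm h, fun h h' => trans h h'⟩
end

section
/- Let X be a distributive binary G-space and x ∈ X. If g₀(x,x) is any point of the orbit G(x,x), then G(g₀(x,x), g₀(x,x)) = G(x,x); in particular, for any g ∈ G one has g(x,x) = (g₀⁻¹ g)(g₀(x,x), g₀(x,x)). -/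
/-- In a distributive binary `G`-space, each point of an orbit generates the
same orbit: `G(g₀(x,x), g₀(x,x)) = G(x,x)`, and
`g(x,x) = (g₀⁻¹ g)(g₀(x,x), g₀(x,x))`. -/
theorem orbit_of_orbit_point
    {G X : Type*} [Group G] [TopologicalSpace G] [IsTopologicalGroup G]
    [TopologicalSpace X]
    (α : G → X → X → X)
    (hcont : Continuous fun p : G × X × X => α p.1 p.2.1 p.2.2)
    (hmul : ∀ (g h : G) (x x' : X), α (g * h) x x' = α g x (α h x x'))
    (hone : ∀ (x x' : X), α (1 : G) x x' = x')
    (hdist : ∀ (g h : G) (x x' x'' : X),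
      α g (α h x x') (α h x x'') = α h x (α g x' x''))
    (x : X) (g₀ : G) :
    {y : X | ∃ g : G, y = α g (α g₀ x x) (α g₀ x x)} =
      {y : X | ∃ g : G, y = α g x x} ∧
    ∀ g : G, α g x x = α (g₀⁻¹ * g) (α g₀ x x) (α g₀ x x) := by
  have key : ∀ g : G, α g (α g₀ x x) (α g₀ x x) = α (g₀ * g) x x := by
    intro g
    rw [hdist, hmul]
  constructor
  · ext y
    constructor
    · rintro ⟨g, rfl⟩
      exact ⟨g₀ * g, (key g).symm ▸ rfl⟩
    · rintro ⟨g, rfl⟩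
      exact ⟨g₀⁻¹ * g, by rw [key, mul_inv_cancel_left]⟩
  · intro g
    rw [key, mul_inv_cancel_left]
end

section
/- Let X be a distributive binary G-space. For each g ∈ G, the map Δ_g : X → X defined by Δ_g(x) = g(x,x) is a homeomorphism, with inverse Δ_{g⁻¹}. -/
/-- In a distributive binary `G`-space, `Δ_g x = g(x,x)` is a homeomorphism
of `X` with inverse `Δ_{g⁻¹}`. -/
theorem delta_isHomeomorph
    {G X : Type*} [Group G] [TopologicalSpace G] [IsTopologicalGroup G]
    [TopologicalSpace X]
    (α : G → X → X → X)
    (hcont : Continuous fun p : G × X × X => α p.1 p.2.1 p.2.2)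
    (hmul : ∀ (g h : G) (x x' : X), α (g * h) x x' = α g x (α h x x'))
    (hone : ∀ (x x' : X), α (1 : G) x x' = x')
    (hdist : ∀ (g h : G) (x x' x'' : X),
      α g (α h x x') (α h x x'') = α h x (α g x' x''))
    (g : G) :
    IsHomeomorph (fun x : X => α g x x) ∧
    (∀ x : X, α g⁻¹ (α g x x) (α g x x) = x) ∧
    (∀ x : X, α g (α g⁻¹ x x) (α g⁻¹ x x) = x) := by
  have key : ∀ (a b : G) (x : X), α a (α b x x) (α b x x) = α (b * a) x x := by
    intro a b x
    rw [hdist, ← hmul]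
  have hleft : ∀ x : X, α g⁻¹ (α g x x) (α g x x) = x := by
    intro x; rw [key, mul_inv_cancel, hone]
  have hright : ∀ x : X, α g (α g⁻¹ x x) (α g⁻¹ x x) = x := by
    intro x; rw [key, inv_mul_cancel, hone]
  have hc : ∀ a : G, Continuous (fun x : X => α a x x) := fun a =>
    hcont.comp (continuous_const.prodMk (continuous_id.prodMk continuous_id))
  refine ⟨?_, hleft, hright⟩
  exact (Homeomorph.mk ⟨fun x => α g x x, fun x => α g⁻¹ x x, hleft, hright⟩
    (hc g) (hc g⁻¹)).isHomeomorph
end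

section
/- Let X be a distributive binary G-space (X Hausdorff) and K ⊆ G a compact subset. Then for any closed subset A ⊆ X, the set KA = { g(a,a) : g ∈ K, a ∈ A } is closed in X. -/
/-- In a Hausdorff distributive binary `G`-space, for a compact `K ⊆ G` and a
closed `A ⊆ X`, the set `KA = { g(a,a) : g ∈ K, a ∈ A }` is closed. -/
theorem KA_isClosed
    {G X : Type*} [Group G] [TopologicalSpace G] [IsTopologicalGroup G]
    [TopologicalSpace X] [T2Space X]
    (α : G → X → X → X)
    (hcont : Continuous fun p : G × X × X => α p.1 p.2.1 p.2.2)
    (hmul : ∀ (g h : G) (x x' : X), α (g * h) x x' = α g x (α h x x'))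
    (hone : ∀ (x x' : X), α (1 : G) x x' = x')
    (hdist : ∀ (g h : G) (x x' x'' : X),
      α g (α h x x') (α h x x'') = α h x (α g x' x''))
    (K : Set G) (hK : IsCompact K)
    (A : Set X) (hA : IsClosed A) :
    IsClosed {y : X | ∃ g ∈ K, ∃ a ∈ A, y = α g a a} := by
  -- Key cancellation: Δ_g ∘ Δ_{g⁻¹} = id
  have key : ∀ (g : G) (x : X), α g (α g⁻¹ x x) (α g⁻¹ x x) = x := by
    intro g x
    calc α g (α g⁻¹ x x) (α g⁻¹ x x) = α g⁻¹ x (α g x x) := hdist g g⁻¹ x x x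
    _ = α (g⁻¹ * g) x x := (hmul g⁻¹ g x x).symm
    _ = x := by rw [inv_mul_cancel, hone]
  have key' : ∀ (g : G) (x : X), α g⁻¹ (α g x x) (α g x x) = x := by
    intro g x
    have := key g⁻¹ x
    rwa [inv_inv] at this
  haveI : CompactSpace K := isCompact_iff_compactSpace.mp hK
  have hf : Continuous fun p : K × X => α ((p.1 : G))⁻¹ p.2 p.2 :=
    hcont.comp (show Continuous fun p : K × X => (((p.1 : G))⁻¹, p.2, p.2) by fun_prop)
  have hT : IsClosed {p : K × X | α ((p.1 : G))⁻¹ p.2 p.2 ∈ A} :=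
    hA.preimage hf
  have himg : {y : X | ∃ g ∈ K, ∃ a ∈ A, y = α g a a}
      = Prod.snd '' {p : K × X | α ((p.1 : G))⁻¹ p.2 p.2 ∈ A} := by
    ext y
    constructor
    · rintro ⟨g, hg, a, ha, rfl⟩
      exact ⟨(⟨g, hg⟩, α g a a), by simpa [key' g a] using ha, rfl⟩
    · rintro ⟨⟨⟨g, hg⟩, x⟩, hx, rfl⟩
      exact ⟨g, hg, α g⁻¹ x x, hx, (key g x).symm⟩
  rw [himg]
  exact isClosedMap_snd_of_compactSpace _ hT
end

section
/- Let G be a compact topological group and X a Hausdorff distributive binary G-space. Then for any closed A ⊆ X, the union of orbits GA = ⋃_{a∈A} G(a,a) is closed in X. -/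
/-- For a compact group `G` and a Hausdorff distributive binary `G`-space `X`,
the union of the orbits of points of a closed set `A` is closed. -/
theorem GA_isClosed
    {G X : Type*} [Group G] [TopologicalSpace G] [IsTopologicalGroup G]
    [CompactSpace G] [TopologicalSpace X] [T2Space X]
    (α : G → X → X → X)
    (hcont : Continuous fun p : G × X × X => α p.1 p.2.1 p.2.2)
    (hmul : ∀ (g h : G) (x x' : X), α (g * h) x x' = α g x (α h x x'))
    (hone : ∀ (x x' : X), α (1 : G) x x' = x')
    (hdist : ∀ (g h : G) (x x' x'' : X),
      α g (α h x x') (α h x x'') = α h x (α g x' x''))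
    (A : Set X) (hA : IsClosed A) :
    IsClosed (⋃ a ∈ A, {y : X | ∃ g : G, y = α g a a}) := by
  -- β g y := α g y y is a right action: β g (β h y) = β (h*g) y
  have hβ : ∀ (g h : G) (y : X), α g (α h y y) (α h y y) = α (h * g) y y := by
    intro g h y
    rw [hdist g h y y y, ← hmul h g y y]
  have hset : (⋃ a ∈ A, {y : X | ∃ g : G, y = α g a a})
      = Prod.snd '' {p : G × X | α p.1 p.2 p.2 ∈ A} := by
    ext y
    simp only [Set.mem_iUnion, Set.mem_setOf_eq, Set.mem_image, Prod.exists]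
    constructor
    · rintro ⟨a, ha, g, rfl⟩
      exact ⟨g⁻¹, α g a a, by simpa [hβ, hone] using ha, rfl⟩
    · rintro ⟨g, y, hy, rfl⟩
      exact ⟨α g y y, hy, g⁻¹, by simp [hβ, hone]⟩
  rw [hset]
  apply isClosedMap_snd_of_compactSpace
  exact hA.preimage ((hcont.comp (continuous_fst.prodMk (continuous_snd.prodMk continuous_snd))) : Continuous fun p : G × X => α p.1 p.2 p.2)
end

section
/- Let G be a compact topological group and X a Hausdorff distributive binary G-space. Then the orbit projection π : X → X|G onto the quotient by the orbit equivalence relation is a closed map. -/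
/-- For a compact group `G` and a Hausdorff distributive binary `G`-space `X`,
the orbit projection `π : X → X|G` is a closed map. -/
theorem orbit_projection_isClosedMap
    {G X : Type*} [Group G] [TopologicalSpace G] [IsTopologicalGroup G]
    [CompactSpace G] [TopologicalSpace X] [T2Space X]
    (α : G → X → X → X)
    (hcont : Continuous fun p : G × X × X => α p.1 p.2.1 p.2.2)
    (hmul : ∀ (g h : G) (x x' : X), α (g * h) x x' = α g x (α h x x'))
    (hone : ∀ (x x' : X), α (1 : G) x x' = x')
    (hdist : ∀ (g h : G) (x x' x'' : X),
      α g (α h x x') (α h x x'') = α h x (α g x' x'')) :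
    IsClosedMap (Quot.mk (fun x y : X => ∃ g : G, y = α g x x)) := by
  set r : X → X → Prop := fun x y => ∃ g : G, y = α g x x with hr
  have hinv : ∀ (g : G) (x : X), α g⁻¹ (α g x x) (α g x x) = x := by
    intro g x
    rw [hdist g⁻¹ g x x x, ← hmul, mul_inv_cancel, hone]
  intro C hC
  have hkey : Quot.mk r ⁻¹' (Quot.mk r '' C)
      = Prod.snd '' {p : G × X | α p.1 p.2 p.2 ∈ C} := by
    ext y
    simp only [Set.mem_preimage, Set.mem_image, Set.mem_setOf_eq]
    constructor
    · rintro ⟨x, hx, hxy⟩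
      have hEq : Equivalence r := by
        constructor
        · intro x; exact ⟨1, (hone x x).symm⟩
        · rintro x y ⟨g, rfl⟩
          exact ⟨g⁻¹, (hinv g x).symm⟩
        · rintro x y z ⟨g, rfl⟩ ⟨h, rfl⟩
          exact ⟨g * h, by rw [hdist h g x x x, hmul]⟩
      obtain ⟨g, rfl⟩ := hEq.eqvGen_iff.mp (Quot.eq.mp hxy)
      exact ⟨(g⁻¹, α g x x), by simpa [hinv g x] using hx, rfl⟩
    · rintro ⟨⟨g, y'⟩, hmem, rfl⟩
      exact ⟨α g y' y', hmem, Quot.sound ⟨g⁻¹, (hinv g y').symm⟩⟩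
  rw [← isQuotientMap_quot_mk.isClosed_preimage, hkey]
  exact isClosedMap_snd_of_compactSpace _
    (hC.preimage (hcont.comp
      (continuous_fst.prodMk (continuous_snd.prodMk continuous_snd))))
end

section
/- Let G be a compact topological group and X a Hausdorff distributive binary G-space. Then the orbit space X|G (quotient of X by the orbit equivalence relation, with the quotient topology) is Hausdorff. -/
/-- For a compact group `G` and a Hausdorff distributive binary `G`-space `X`,
the orbit space `X|G` is Hausdorff. -/
theorem orbit_space_t2
    {G X : Type*} [Group G] [TopologicalSpace G] [IsTopologicalGroup G]
    [CompactSpace G] [TopologicalSpace X] [T2Space X]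
    (α : G → X → X → X)
    (hcont : Continuous fun p : G × X × X => α p.1 p.2.1 p.2.2)
    (hmul : ∀ (g h : G) (x x' : X), α (g * h) x x' = α g x (α h x x'))
    (hone : ∀ (x x' : X), α (1 : G) x x' = x')
    (hdist : ∀ (g h : G) (x x' x'' : X),
      α g (α h x x') (α h x x'') = α h x (α g x' x'')) :
    T2Space (Quot (fun x y : X => ∃ g : G, y = α g x x)) := by
  set r : X → X → Prop := fun x y => ∃ g : G, y = α g x x with hr
  -- key cancellation identity
  have hcancel : ∀ (g : G) (x : X), α g⁻¹ (α g x x) (α g x x) = x := by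
    intro g x
    have h1 := hdist g⁻¹ g x x x
    have h2 := hmul g g⁻¹ x x
    rw [mul_inv_cancel, hone] at h2
    rw [h1, ← h2]
  -- r is an equivalence relation
  have hequiv : Equivalence r := by
    constructor
    · intro x; exact ⟨1, (hone x x).symm⟩
    · rintro x y ⟨g, rfl⟩; exact ⟨g⁻¹, (hcancel g x).symm⟩
    · rintro x y z ⟨g, rfl⟩ ⟨h, rfl⟩
      exact ⟨g * h, by rw [hdist h g x x x, hmul]⟩
  have hmk : ∀ x y : X, Quot.mk r x = Quot.mk r y ↔ r x y := by
    intro x y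
    constructor
    · intro h; exact hequiv.eqvGen_iff.mp (Quot.eqvGen_exact h)
    · intro h; exact Quot.sound h
  -- continuity of the maps x ↦ α g x x
  have hfc : ∀ g : G, Continuous fun x : X => α g x x := by
    intro g
    exact hcont.comp (continuous_const.prodMk (continuous_id.prodMk continuous_id))
  -- the quotient map is open
  have hopen : IsOpenMap (Quot.mk r) := by
    intro U hU
    have : Quot.mk r ⁻¹' (Quot.mk r '' U) = ⋃ g : G, (fun y : X => α g⁻¹ y y) ⁻¹' U := by
      ext y
      simp only [Set.mem_preimage, Set.mem_image, Set.mem_iUnion]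
      constructor
      · rintro ⟨u, hu, hq⟩
        obtain ⟨g, rfl⟩ := (hmk u y).mp hq
        exact ⟨g, by rwa [hcancel g u]⟩
      · rintro ⟨g, hg⟩
        refine ⟨α g⁻¹ y y, hg, (hmk _ y).mpr ⟨g, ?_⟩⟩
        have := hcancel g⁻¹ y
        rw [inv_inv] at this
        exact this.symm
    rw [isOpen_coinduced (f := Quot.mk r), this]
    exact isOpen_iUnion fun g => (hfc g⁻¹).isOpen_preimage U hU
  have hoq : IsOpenQuotientMap (Quot.mk r) :=
    ⟨Quot.exists_rep, continuous_quot_mk, hopen⟩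
  -- the graph of r is closed
  have hclosed : IsClosed {p : X × X | r p.1 p.2} := by
    have : {p : X × X | r p.1 p.2} =
        Prod.snd '' {q : G × (X × X) | q.2.2 = α q.1 q.2.1 q.2.1} := by
      ext ⟨x, y⟩
      simp only [Set.mem_setOf_eq, Set.mem_image, Prod.exists]
      constructor
      · rintro ⟨g, rfl⟩; exact ⟨g, x, _, rfl, rfl⟩
      · rintro ⟨g, x', y', h, h2⟩
        rw [Prod.mk.injEq] at h2
        obtain ⟨rfl, rfl⟩ := h2
        exact ⟨g, h⟩
    rw [this]
    have hcl : IsClosed {q : G × (X × X) | q.2.2 = α q.1 q.2.1 q.2.1} := by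
      apply isClosed_eq
      · exact continuous_snd.comp continuous_snd
      · exact hcont.comp (continuous_fst.prodMk
          ((continuous_fst.comp continuous_snd).prodMk (continuous_fst.comp continuous_snd)))
    exact isClosedMap_snd_of_compactSpace _ hcl
  -- conclude
  rw [t2_iff_isClosed_diagonal]
  have hqq : IsOpenQuotientMap (Prod.map (Quot.mk r) (Quot.mk r)) := hoq.prodMap hoq
  rw [← hqq.isQuotientMap.isClosed_preimage]
  have : Prod.map (Quot.mk r) (Quot.mk r) ⁻¹' Set.diagonal _ = {p : X × X | r p.1 p.2} := by
    ext ⟨x, y⟩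
    simp only [Set.mem_preimage, Prod.map_apply, Set.mem_diagonal_iff, Set.mem_setOf_eq]
    exact hmk x y
  rw [this]
  exact hclosed
end
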